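/- Let z_{(1)} ≥ … ≥ z_{(K)} be the sorted coordinates of z and k(z) := max{k ∈ [K] : 1 + k·z_{(k)} > ∑_{j≤k} z_{(j)}}. Then the support size of sparsemax(z) equals k(z), and τ(z) = ((∑_{j≤k(z)} z_{(j)}) − 1)/k(z). -/

import Mathlib

open Finset

def simplex (K : ℕ) : Set (Fin K → ℝ) :=
  {p | (∑ i, p i) = 1 ∧ ∀ i, 0 ≤ p i}

def IsSparsemax {K : ℕ} (z p : Fin K → ℝ) : Prop :=
  p ∈ simplex K ∧ ∀ q ∈ simplex K, (∑ i, (p i - z i) ^ 2) ≤ ∑ i, (q i - z i) ^ 2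

theorem stmt2 {K : ℕ} (z p : Fin K → ℝ) (τ : ℝ) (σ : Equiv.Perm (Fin K))
    (hsort : ∀ i j : Fin K, i ≤ j → z (σ j) ≤ z (σ i))
    (h : IsSparsemax z p) (hτ : ∀ i, p i = max 0 (z i - τ))
    (kz : Fin K)
    (hk : 1 + ((kz : ℕ) + 1 : ℝ) * z (σ kz) > ∑ j ∈ Finset.Iic kz, z (σ j))
    (hmax : ∀ k : Fin K,
      (1 + ((k : ℕ) + 1 : ℝ) * z (σ k) > ∑ j ∈ Finset.Iic k, z (σ j)) → k ≤ kz) :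
    (Finset.univ.filter (fun j => 0 < p j)).card = (kz : ℕ) + 1 ∧
    τ = ((∑ j ∈ Finset.Iic kz, z (σ j)) - 1) / ((kz : ℕ) + 1) := by
  obtain ⟨⟨hsum, hnn⟩, -⟩ := h
  have hpos : ∀ j, 0 < p j ↔ τ < z j := by
    intro j
    rw [hτ j, lt_max_iff]
    simp [sub_pos]
  set T : Finset (Fin K) := univ.filter (fun i => τ < z (σ i)) with hT
  have hmemT : ∀ i, i ∈ T ↔ τ < z (σ i) := by intro i; simp [hT]
  have hdc : ∀ i j : Fin K, i ≤ j → j ∈ T → i ∈ T := by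
    intro i j hij hj
    rw [hmemT] at *
    exact lt_of_lt_of_le hj (hsort i j hij)
  have hTne : T.Nonempty := by
    by_contra hne
    rw [Finset.not_nonempty_iff_eq_empty] at hne
    have hz : ∀ j, p j = 0 := by
      intro j
      have h1 : ¬ τ < z (σ (σ.symm j)) := by
        intro hlt
        have := (hmemT (σ.symm j)).mpr hlt
        simp [hne] at this
      rw [Equiv.apply_symm_apply] at h1
      have := (hpos j).not.mpr h1
      exact le_antisymm (not_lt.mp this) (hnn j)
    rw [Finset.sum_congr rfl (fun j _ => hz j)] at hsum
    simp at hsum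
  set m := T.max' hTne with hm
  have hmT : m ∈ T := T.max'_mem hTne
  have hTIic : T = Finset.Iic m := by
    ext i
    simp only [Finset.mem_Iic]
    constructor
    · exact fun hi => T.le_max' i hi
    · exact fun hi => hdc i m hi hmT
  have himg : univ.filter (fun j => 0 < p j) = T.image σ := by
    ext j
    simp only [Finset.mem_image, mem_filter, mem_univ, true_and]
    constructor
    · intro hj
      exact ⟨σ.symm j, (hmemT _).mpr (by rw [Equiv.apply_symm_apply]; exact (hpos j).mp hj),
        by simp⟩
    · rintro ⟨i, hi, rfl⟩
      exact (hpos _).mpr ((hmemT i).mp hi)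
  have hcard : (univ.filter (fun j => 0 < p j)).card = (m : ℕ) + 1 := by
    rw [himg, Finset.card_image_of_injective _ σ.injective, hTIic, Fin.card_Iic]
  have hsum1 : ∑ i ∈ Finset.Iic m, (z (σ i) - τ) = 1 := by
    have h1 : ∑ j ∈ univ.filter (fun j => 0 < p j), p j = 1 := by
      rw [Finset.sum_filter_of_ne (fun x _ hx => lt_of_le_of_ne (hnn x) (Ne.symm hx)), hsum]
    rw [himg, Finset.sum_image (fun a _ b _ hab => σ.injective hab), hTIic] at h1
    rw [← h1]
    apply Finset.sum_congr rfl
    intro i hi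
    have : τ < z (σ i) := (hmemT i).mp (hTIic ▸ hi)
    rw [hτ, max_eq_right (le_of_lt (sub_pos.mpr this))]
  have hsum2 : ∑ i ∈ Finset.Iic m, z (σ i) = 1 + ((m : ℕ) + 1) * τ := by
    rw [Finset.sum_sub_distrib, Finset.sum_const, Fin.card_Iic, nsmul_eq_mul] at hsum1
    push_cast at hsum1 ⊢
    linarith
  have hmk : m ≤ kz := by
    apply hmax m
    have hz : τ < z (σ m) := (hmemT m).mp hmT
    rw [hsum2]
    have : (0 : ℝ) ≤ (m : ℕ) := Nat.cast_nonneg _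
    nlinarith
  have hkm : kz ≤ m := by
    by_contra hlt
    push_neg at hlt
    have hzk : z (σ kz) ≤ τ := by
      by_contra hgt
      push_neg at hgt
      exact absurd (T.le_max' kz ((hmemT kz).mpr hgt)) (not_le.mpr hlt)
    have hsplit : Finset.Iic kz = Finset.Iic m ∪ Finset.Ioc m kz := by
      ext i
      simp only [Finset.mem_Iic, Finset.mem_union, Finset.mem_Ioc, Fin.le_def, Fin.lt_def]
      have := Fin.lt_def.mp hlt
      omega
    have hdisj : Disjoint (Finset.Iic m) (Finset.Ioc m kz) := by
      rw [Finset.disjoint_left]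
      intro a ha ha'
      exact absurd (Finset.mem_Iic.mp ha) (not_le.mpr (Finset.mem_Ioc.mp ha').1)
    have hge : ((Finset.Ioc m kz).card : ℝ) * z (σ kz) ≤ ∑ j ∈ Finset.Ioc m kz, z (σ j) := by
      rw [← nsmul_eq_mul]
      exact Finset.card_nsmul_le_sum _ _ _ (fun j hj => hsort j kz (Finset.mem_Ioc.mp hj).2)
    rw [Fin.card_Ioc] at hge
    have hcast : (((kz : ℕ) - (m : ℕ) : ℕ) : ℝ) = ((kz : ℕ) : ℝ) - ((m : ℕ) : ℝ) :=
      Nat.cast_sub (le_of_lt (Fin.lt_def.mp hlt))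
    rw [hcast] at hge
    have hmk' : ((m : ℕ) : ℝ) < ((kz : ℕ) : ℝ) := by exact_mod_cast Fin.lt_def.mp hlt
    have hbig : ∑ j ∈ Finset.Iic kz, z (σ j) ≥ 1 + ((kz : ℕ) + 1) * z (σ kz) := by
      rw [hsplit, Finset.sum_union hdisj, hsum2]
      nlinarith
    linarith
  have heq : m = kz := le_antisymm hmk hkm
  rw [heq] at hcard hsum2
  refine ⟨hcard, ?_⟩
  rw [hsum2, eq_div_iff (by positivity)]
  ring
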